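/- Let G be a connected graph with at least k+1 vertices. If for every two vertices u and v of G with distance exactly 2 in G there exist k pairwise independent u–v paths (paths sharing no vertices other than u and v), then G is k-connected. -/

import Mathlib

open Finset

variable {V : Type*} [DecidableEq V]

/-- A (finite abstract) simplicial complex: a nonempty, downward closed family of finite
vertex sets (the empty face is always included). -/
def IsComplex (K : Set (Finset V)) : Prop :=
  K.Nonempty ∧ ∀ σ ∈ K, ∀ τ : Finset V, τ ⊆ σ → τ ∈ K

/-- A facet: a face maximal under inclusion. -/
def IsFacet (K : Set (Finset V)) (F : Finset V) : Prop :=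
  F ∈ K ∧ ∀ G ∈ K, F ⊆ G → G = F

/-- PureCplx of dimension `d`: every face is contained in a facet and all facets have `d+1` vertices. -/
def PureCplx (K : Set (Finset V)) (d : ℕ) : Prop :=
  (∀ σ ∈ K, ∃ F, IsFacet K F ∧ σ ⊆ F) ∧ ∀ F, IsFacet K F → F.card = d + 1

def IsVertex (K : Set (Finset V)) (x : V) : Prop := ({x} : Finset V) ∈ K

/-- The 1-skeleton graph of a complex (on the ambient vertex type). -/
def skeleton (K : Set (Finset V)) : SimpleGraph V where
  Adj x y := x ≠ y ∧ ({x, y} : Finset V) ∈ K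
  symm := by
    refine ⟨?_⟩
    intro x y h
    exact ⟨h.1.symm, by rw [Finset.pair_comm]; exact h.2⟩
  loopless := ⟨fun x h => h.1 rfl⟩

/-- A clique of the 1-skeleton of `K`. -/
def IsCliqueIn (K : Set (Finset V)) (T : Finset V) : Prop :=
  ∀ u ∈ T, ∀ v ∈ T, u ≠ v → ({u, v} : Finset V) ∈ K

/-- A critical clique: removing some vertex yields a face. -/
def IsCritical (K : Set (Finset V)) (T : Finset V) : Prop :=
  ∃ v ∈ T, T.erase v ∈ K

/-- `K` contains the boundary complex of a `(d+1)`-simplex as a subcomplex. -/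
def ContainsSimplexBoundary (K : Set (Finset V)) (d : ℕ) : Prop :=
  ∃ S : Finset V, S.card = d + 2 ∧ ∀ τ : Finset V, τ ⊆ S → τ ≠ S → τ ∈ K

/-- Banner (for a pure `d`-complex): every critical `(d+1)`-clique is spanning and no
boundary of a `(d+1)`-simplex occurs as a subcomplex. -/
def Banner (K : Set (Finset V)) (d : ℕ) : Prop :=
  (∀ T : Finset V, IsCliqueIn K T → T.card = d + 1 → IsCritical K T → T ∈ K) ∧
    ¬ ContainsSimplexBoundary K d

/-- Strongly banner: every `(d+1)`-clique is spanning and no boundary of a `(d+1)`-simplex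
occurs as a subcomplex. -/
def StronglyBanner (K : Set (Finset V)) (d : ℕ) : Prop :=
  (∀ T : Finset V, IsCliqueIn K T → T.card = d + 1 → T ∈ K) ∧
    ¬ ContainsSimplexBoundary K d

/-- FlagCplx: every clique of the 1-skeleton is a face. -/
def FlagCplx (K : Set (Finset V)) : Prop :=
  ∀ T : Finset V, IsCliqueIn K T → T ∈ K

/-- The link of a face `σ`. -/
def link (K : Set (Finset V)) (σ : Finset V) : Set (Finset V) :=
  {τ : Finset V | Disjoint τ σ ∧ τ ∪ σ ∈ K}

/-- The facet graph of a pure `d`-complex: facets adjacent when they share a `(d-1)`-face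
(i.e. their intersection has `d` vertices). -/
def facetGraph (K : Set (Finset V)) (d : ℕ) : SimpleGraph {F : Finset V // IsFacet K F} where
  Adj F G := F ≠ G ∧ ((F : Finset V) ∩ (G : Finset V)).card = d
  symm := by
    refine ⟨?_⟩
    intro F G h
    exact ⟨h.1.symm, by rw [Finset.inter_comm]; exact h.2⟩
  loopless := ⟨fun F h => h.1 rfl⟩

/-- Strong connectivity: the facet graph is connected. -/
def StronglyConnected (K : Set (Finset V)) (d : ℕ) : Prop :=
  (facetGraph K d).Connected

/-- A `d`-dimensional pseudomanifold: pure `d`-complex, every `(d-1)`-face is in exactly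
two facets, and the facet graph is connected. -/
def Pseudomanifold (K : Set (Finset V)) (d : ℕ) : Prop :=
  IsComplex K ∧ PureCplx K d ∧
    (∀ σ ∈ K, σ.card = d → {F : Finset V | IsFacet K F ∧ σ ⊆ F}.ncard = 2) ∧
    StronglyConnected K d

/-- Connectivity of a complex: the 1-skeleton induced on its vertex set is connected. -/
def ComplexConnected (K : Set (Finset V)) : Prop :=
  ((skeleton K).induce {x : V | IsVertex K x}).Connected

/-- A normal pseudomanifold: all links of faces of dimension at least one are connected. -/
def NormalPM (K : Set (Finset V)) (d : ℕ) : Prop :=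
  Pseudomanifold K d ∧ ∀ σ ∈ K, σ.card + 1 ≤ d → ComplexConnected (link K σ)

/-- The closed neighborhood `N(x)`: `x` together with its neighbors. -/
def closedNbhd (K : Set (Finset V)) (x : V) : Set V :=
  {x} ∪ {z : V | ({x, z} : Finset V) ∈ K}

/-- The subcomplex induced on a set `A` of vertices. -/
def inducedSub (K : Set (Finset V)) (A : Set V) : Set (Finset V) :=
  {σ ∈ K | ∀ v ∈ σ, v ∈ A}

/-- The antistar of a vertex: the induced subcomplex on all other vertices. -/
def antistar (K : Set (Finset V)) (x : V) : Set (Finset V) :=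
  {σ ∈ K | x ∉ σ}

/-- `K` is the boundary of a triangle, i.e. the 3-cycle `C₃`. -/
def IsC3 (K : Set (Finset V)) : Prop :=
  ∃ a b c : V, a ≠ b ∧ a ≠ c ∧ b ≠ c ∧
    K = {τ : Finset V | τ ⊆ ({a, b, c} : Finset V) ∧ τ ≠ ({a, b, c} : Finset V)}

/-- The banner number of a pure `d`-complex. -/
noncomputable def bannerNumber (K : Set (Finset V)) (d : ℕ) : ℕ :=
  sInf {j : ℕ | ∀ σ ∈ K, σ.card = j → Banner (link K σ) (d - j) ∨ IsC3 (link K σ)}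

/-- `k`-connectivity of a graph: more than `k` vertices, and removing fewer than `k`
vertices leaves it connected. -/
def KConnected {W : Type*} [Fintype W] [DecidableEq W] (G : SimpleGraph W) (k : ℕ) : Prop :=
  k < Fintype.card W ∧
    ∀ S : Finset W, S.card < k → (G.induce ((↑S : Set W)ᶜ)).Connected

/-- Existence of `k` pairwise independent `u`–`v` paths: paths sharing no vertices other
than `u` and `v`. -/
def IndepPaths {W : Type*} (G : SimpleGraph W) (u v : W) (k : ℕ) : Prop :=
  ∃ p : Fin k → G.Walk u v, (∀ i, (p i).IsPath) ∧
    ∀ i j, i ≠ j → ∀ w : W, w ∈ (p i).support → w ∈ (p j).support → w = u ∨ w = v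

/-- Transfer a walk avoiding the removed set into the induced subgraph. -/
lemma liu_reachable_induce_of_walk {W : Type*} (G : SimpleGraph W) (s : Set W) {a b : W}
    (p : G.Walk a b) (h : ∀ x ∈ p.support, x ∈ s) (ha : a ∈ s) (hb : b ∈ s) :
    (G.induce s).Reachable ⟨a, ha⟩ ⟨b, hb⟩ := by
  induction p with
  | nil => rfl
  | @cons u c v hadj q ih =>
    have hc : c ∈ s := h c (by simp [SimpleGraph.Walk.support_cons])
    have h' : ∀ x ∈ q.support, x ∈ s := fun x hx =>
      h x (by simp [SimpleGraph.Walk.support_cons, hx])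
    exact SimpleGraph.Reachable.trans (SimpleGraph.Adj.reachable (by exact hadj)) (ih h' hc hb)

lemma liu_card_le_of_hits {W : Type*} [DecidableEq W] {G : SimpleGraph W} {k : ℕ} {S : Finset W}
    {u v : W} (hind : IndepPaths G u v k)
    (hhit : ∀ p : G.Walk u v, p.IsPath → ∃ x ∈ p.support, x ∈ S ∧ x ≠ u ∧ x ≠ v) :
    k ≤ S.card := by
  obtain ⟨p, hp, hdisj⟩ := hind
  choose f hfsup hfS hfu hfv using fun i => hhit (p i) (hp i)
  have hinj : Function.Injective fun i => (⟨f i, hfS i⟩ : {x // x ∈ S}) := by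
    intro i j hij
    by_contra hne
    have hval : f i = f j := congrArg Subtype.val hij
    rcases hdisj i j hne (f i) (hfsup i) (hval ▸ hfsup j) with h | h
    · exact hfu i h
    · exact hfv i h
  calc k = Fintype.card (Fin k) := (Fintype.card_fin k).symm
    _ ≤ Fintype.card {x // x ∈ S} := Fintype.card_le_of_injective _ hinj
    _ = S.card := Fintype.card_coe S


/-- **Liu's criterion.** If a connected graph with at least `k+1` vertices has `k`
independent paths between any two vertices at distance 2, then it is `k`-connected. -/
theorem liu_criterion {W : Type*} [Fintype W] [DecidableEq W] (G : SimpleGraph W) (k : ℕ)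
    (hconn : G.Connected) (hcard : k + 1 ≤ Fintype.card W)
    (hpaths : ∀ u v : W, G.dist u v = 2 → IndepPaths G u v k) :
    KConnected G k := by
  unfold KConnected
  refine ⟨by omega, ?_⟩
  intro S hS
  have hR : ∀ a b : W, a ∉ S → b ∉ S → ∃ p : G.Walk a b, ∀ x ∈ p.support, x ∉ S := by
    by_contra hcon
    push_neg at hcon
    obtain ⟨a, b, ha, hb, hab⟩ := hcon
    set D : Set ℕ := {d | ∃ u v : W, u ∉ S ∧ v ∉ S ∧
      (∀ p : G.Walk u v, ∃ x ∈ p.support, x ∈ S) ∧ G.dist u v = d} with hD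
    have hne : D.Nonempty := ⟨G.dist a b, a, b, ha, hb, hab, rfl⟩
    obtain ⟨u, v, hu, hv, hbad, hdeq⟩ := Nat.sInf_mem hne
    set d := sInf D with hd
    have hmin : ∀ u' v' : W, u' ∉ S → v' ∉ S → G.dist u' v' < d →
        ∃ p : G.Walk u' v', ∀ x ∈ p.support, x ∉ S := by
      intro u' v' hu' hv' hlt
      by_contra hcon'
      push_neg at hcon'
      have : d ≤ G.dist u' v' := Nat.sInf_le ⟨u', v', hu', hv', hcon', rfl⟩
      omega
    rcases Nat.lt_or_ge d 3 with hd3 | hd3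
    · interval_cases d
      · -- d = 0
        have huv : u = v := hconn.dist_eq_zero_iff.mp hdeq
        subst huv
        obtain ⟨x, hx, hxS⟩ := hbad SimpleGraph.Walk.nil
        simp only [SimpleGraph.Walk.support_nil, List.mem_singleton] at hx
        exact hu (hx ▸ hxS)
      · -- d = 1
        have hadj : G.Adj u v := SimpleGraph.dist_eq_one_iff_adj.mp hdeq
        obtain ⟨x, hx, hxS⟩ := hbad hadj.toWalk
        simp [SimpleGraph.Adj.toWalk] at hx
        rcases hx with rfl | rfl
        · exact hu hxS
        · exact hv hxS
      · -- d = 2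
        have hhit : ∀ p : G.Walk u v, p.IsPath → ∃ x ∈ p.support, x ∈ S ∧ x ≠ u ∧ x ≠ v := by
          intro p _
          obtain ⟨x, hx, hxS⟩ := hbad p
          exact ⟨x, hx, hxS, fun h => hu (h ▸ hxS), fun h => hv (h ▸ hxS)⟩
        have := liu_card_le_of_hits (hpaths u v hdeq) hhit
        omega
    · -- d ≥ 3
      obtain ⟨p, hplen⟩ := SimpleGraph.exists_walk_of_dist_ne_zero
        (show G.dist u v ≠ 0 by omega)
      rw [hdeq] at hplen
      revert hplen
      cases p with
      | nil => intro h; simp at h; omega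
      | @cons _ x1 _ h1 q =>
        cases q with
        | nil => intro h; simp at h; omega
        | @cons _ x2 _ h2 r =>
          intro hplen
          simp only [SimpleGraph.Walk.length_cons] at hplen
          have hx1v : G.dist x1 v ≤ r.length + 1 := by
            simpa using SimpleGraph.dist_le (SimpleGraph.Walk.cons h2 r)
          have hx2v : G.dist x2 v ≤ r.length := SimpleGraph.dist_le r
          have hx1S : x1 ∈ S := by
            by_contra hx1
            obtain ⟨w, hw⟩ := hmin x1 v hx1 hv (by omega)
            obtain ⟨x, hxsup, hxS⟩ := hbad (SimpleGraph.Walk.cons h1 w)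
            rw [SimpleGraph.Walk.support_cons] at hxsup
            rcases List.mem_cons.mp hxsup with rfl | hx
            · exact hu hxS
            · exact hw x hx hxS
          have hle2 : G.dist u x2 ≤ 2 := by
            simpa using SimpleGraph.dist_le
              (SimpleGraph.Walk.cons h1 (SimpleGraph.Walk.cons h2 SimpleGraph.Walk.nil))
          have htri : G.dist u v ≤ G.dist u x2 + G.dist x2 v := hconn.dist_triangle
          have hdu2 : G.dist u x2 = 2 := by omega
          by_cases hx2S : x2 ∈ S
          · -- x2 ∈ S : each independent u–x2 path hits S away from u and x2
            have hune : u ≠ x2 := by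
              rintro rfl
              rw [SimpleGraph.dist_self] at hdu2
              omega
            have hhit : ∀ pw : G.Walk u x2, pw.IsPath →
                ∃ x ∈ pw.support, x ∈ S ∧ x ≠ u ∧ x ≠ x2 := by
              intro pw hpw
              by_contra hcon2
              have hsup : ∀ x ∈ pw.support, x ∈ S → x = x2 := by
                intro x hx hxS
                by_contra hne
                exact hcon2 ⟨x, hx, hxS, fun h => hu (h ▸ hxS), hne⟩
              have hprp : pw.reverse.IsPath := hpw.reverse
              have hprsup : ∀ x ∈ pw.reverse.support, x ∈ S → x = x2 := by
                intro x hx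
                rw [SimpleGraph.Walk.support_reverse, List.mem_reverse] at hx
                exact hsup x hx
              revert hprp hprsup
              generalize pw.reverse = pr
              intro hprp hprsup
              cases pr with
              | nil => exact hune rfl
              | @cons _ w _ hadj q' =>
                have hwne : w ≠ x2 := hadj.ne'
                have hwS : w ∉ S := fun hwS =>
                  hwne (hprsup w (by simp [SimpleGraph.Walk.support_cons]) hwS)
                have hq'S : ∀ x ∈ q'.reverse.support, x ∉ S := by
                  intro x hx hxS
                  rw [SimpleGraph.Walk.support_reverse, List.mem_reverse] at hx
                  have hx2' : x = x2 :=
                    hprsup x (by simp [SimpleGraph.Walk.support_cons, hx]) hxS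
                  have hnd := hprp.support_nodup
                  rw [SimpleGraph.Walk.support_cons] at hnd
                  exact (List.nodup_cons.mp hnd).1 (hx2' ▸ hx)
                have hwx2 : G.dist w x2 ≤ 1 :=
                  le_of_eq (SimpleGraph.dist_eq_one_iff_adj.mpr hadj.symm)
                have htri2 : G.dist w v ≤ G.dist w x2 + G.dist x2 v := hconn.dist_triangle
                obtain ⟨t, ht⟩ := hmin w v hwS hv (by omega)
                obtain ⟨x, hxsup, hxS⟩ := hbad (q'.reverse.append t)
                rw [SimpleGraph.Walk.mem_support_append_iff] at hxsup
                rcases hxsup with hx | hx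
                · exact hq'S x hx hxS
                · exact ht x hx hxS
            have := liu_card_le_of_hits (hpaths u x2 hdu2) hhit
            omega
          · -- x2 ∉ S
            by_cases hRx2v : ∃ w : G.Walk x2 v, ∀ x ∈ w.support, x ∉ S
            · obtain ⟨w, hw⟩ := hRx2v
              have hhit : ∀ pw : G.Walk u x2, pw.IsPath →
                  ∃ x ∈ pw.support, x ∈ S ∧ x ≠ u ∧ x ≠ x2 := by
                intro pw _
                by_contra hcon2
                have hsupS : ∀ x ∈ pw.support, x ∉ S := by
                  intro x hx hxS
                  exact hcon2 ⟨x, hx, hxS, fun h => hu (h ▸ hxS), fun h => hx2S (h ▸ hxS)⟩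
                obtain ⟨x, hxsup, hxS⟩ := hbad (pw.append w)
                rw [SimpleGraph.Walk.mem_support_append_iff] at hxsup
                rcases hxsup with hx | hx
                · exact hsupS x hx hxS
                · exact hw x hx hxS
              have := liu_card_le_of_hits (hpaths u x2 hdu2) hhit
              omega
            · push_neg at hRx2v
              have : d ≤ G.dist x2 v := Nat.sInf_le ⟨x2, v, hx2S, hv, hRx2v, rfl⟩
              omega
  -- conclude connectivity of the induced graph
  have hex : ∃ x : W, x ∉ S := by
    by_contra hall
    push_neg at hall
    have hsub : (Finset.univ : Finset W) ⊆ S := fun x _ => hall x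
    have := Finset.card_le_card hsub
    rw [Finset.card_univ] at this
    omega
  obtain ⟨x0, hx0⟩ := hex
  haveI : Nonempty ((↑S : Set W)ᶜ : Set W) := ⟨⟨x0, by simpa using hx0⟩⟩
  constructor
  rintro ⟨c, hc⟩ ⟨e, he⟩
  have hc' : c ∉ S := by simpa using hc
  have he' : e ∉ S := by simpa using he
  obtain ⟨p, hp⟩ := hR c e hc' he'
  exact liu_reachable_induce_of_walk G _ p (fun x hx => by simpa using hp x hx) hc he
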